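/- Let α_j = 2·cos((2j-1)π/(2L)). For v ∈ ℂ with |v| small and κ with |cos κ| small, the solution α_j(v, κ) of Δ_L(E) = 2·cos κ nearest α_j satisfies α_j(v, κ) = α_j + v/L + 2·(-1)^{j-1}·(sin((2j-1)π/(2L))/L)·cos κ + O((|v| + |cos κ|)²). -/

import Mathlib

open Polynomial Real

noncomputable def sparseDiscriminant (L : ℕ) (v : ℂ) (E : ℂ) : ℂ :=
  2 * (Polynomial.Chebyshev.T ℂ L).eval (E / 2)
    - v * (Polynomial.Chebyshev.U ℂ (L - 1)).eval (E / 2)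

set_option maxHeartbeats 1600000 in
theorem floquet_perturbation_small_v (L : ℕ) (hL : 1 ≤ L) (j : ℕ)
    (hj1 : 1 ≤ j) (hjL : j ≤ L) :
    ∃ C δ : ℝ, 0 < C ∧ 0 < δ ∧ ∀ (v : ℂ) (κ : ℝ),
      ‖v‖ + |Real.cos κ| < δ →
      ∃ E : ℂ, sparseDiscriminant L v E = 2 * Real.cos κ ∧
        ‖E - 2 * Complex.cos ((2 * j - 1) * Real.pi / (2 * L)) - v / L
            - 2 * (-1) ^ (j - 1) * (Real.sin ((2 * j - 1) * Real.pi / (2 * L)) / L : ℝ)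
              * Real.cos κ‖
          ≤ C * (‖v‖ + |Real.cos κ|) ^ 2 := by
  have hLR : (0:ℝ) < L := by exact_mod_cast hL
  have hLC : (L:ℂ) ≠ 0 := by exact_mod_cast (show (L:ℕ) ≠ 0 by omega)
  -- the angle
  set θ : ℝ := (2 * (j:ℝ) - 1) * π / (2 * (L:ℝ)) with hθdef
  have hj2 : (1:ℝ) ≤ 2 * (j:ℝ) - 1 := by
    have : (1:ℝ) ≤ (j:ℝ) := by exact_mod_cast hj1
    linarith
  have hθpos : 0 < θ := by
    apply div_pos (by nlinarith [Real.pi_pos]) (by linarith)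
  have hθlt : θ < π := by
    rw [hθdef, div_lt_iff₀ (by linarith : (0:ℝ) < 2 * L)]
    have : (j:ℝ) ≤ (L:ℝ) := by exact_mod_cast hjL
    nlinarith [Real.pi_pos]
  set s : ℝ := Real.sin θ with hsdef
  have hs0 : 0 < s := Real.sin_pos_of_pos_of_lt_pi hθpos hθlt
  have hLθ : (L:ℝ) * θ = (j:ℝ) * π - π/2 := by
    rw [hθdef]; field_simp
  have hcosLθ : Real.cos ((L:ℝ) * θ) = 0 := by
    rw [hLθ]
    have := Real.cos_int_mul_pi_sub (π/2) (j:ℤ)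
    push_cast at this
    rw [this, Real.cos_pi_div_two, mul_zero]
  have hsinLθ : Real.sin ((L:ℝ) * θ) = (-1:ℝ)^(j-1) := by
    rw [hLθ]
    have h1 : Real.sin ((j:ℝ) * π - π/2) = -Real.sin (π/2 - (j:ℝ)*π) := by
      rw [← Real.sin_neg]; ring_nf
    have h2 := Real.sin_sub_nat_mul_pi (π/2) j
    rw [h1, h2, Real.sin_pi_div_two, mul_one]
    obtain ⟨k, rfl⟩ : ∃ k, j = k + 1 := ⟨j - 1, by omega⟩
    simp [pow_succ]
  -- complex versions
  set θc : ℂ := (θ : ℂ) with hθcdef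
  set z : ℂ := Complex.cos θc with hzdef
  set α : ℂ := 2 * z with hαdef
  have hz2 : α * 2⁻¹ = z := by rw [hαdef]; ring
  set P : ℂ[X] := Polynomial.Chebyshev.T ℂ (L:ℤ) with hPdef
  set Q : ℂ[X] := Polynomial.Chebyshev.U ℂ ((L:ℤ) - 1) with hQdef
  have hLθc : (L:ℂ) * θc = (((L:ℝ) * θ : ℝ) : ℂ) := by push_cast; ring
  have hT0 : P.eval z = 0 := by
    rw [hPdef, hzdef, Polynomial.Chebyshev.T_complex_cos]
    push_cast
    rw [hLθc, ← Complex.ofReal_cos, hcosLθ, Complex.ofReal_zero]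
  set B : ℂ := Q.eval z with hBdef
  set e₁ : ℂ := ((-1:ℝ)^(j-1) : ℂ) with he₁def
  have he₁ : e₁ * e₁ = 1 := by
    rw [he₁def]; push_cast; rw [← pow_add]; simp [← two_mul, pow_mul]
  have he₁0 : e₁ ≠ 0 := by
    intro h; rw [h, mul_zero] at he₁; exact one_ne_zero he₁.symm
  have hsc : Complex.sin θc = (s : ℂ) := by
    rw [hθcdef, ← Complex.ofReal_sin, hsdef]
  have hsc0 : (s:ℂ) ≠ 0 := by exact_mod_cast ne_of_gt hs0
  have hBs : B * (s:ℂ) = e₁ := by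
    rw [hBdef, hzdef, ← hsc, hQdef, Polynomial.Chebyshev.U_complex_cos]
    have : ((L:ℤ) - 1 + 1 : ℂ) = (L:ℂ) := by push_cast; ring
    rw [show (((L:ℤ) - 1 : ℤ) : ℂ) + 1 = (L:ℂ) by push_cast; ring]
    rw [hLθc, ← Complex.ofReal_sin, hsinLθ, he₁def]
    push_cast
    ring
  have hB0 : B ≠ 0 := by
    intro h; rw [h, zero_mul] at hBs; exact he₁0 hBs.symm
  set a : ℂ := (L:ℂ) * B with hadef
  have ha0 : a ≠ 0 := mul_ne_zero hLC hB0
  have hPda : (derivative P).eval z = a := by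
    rw [hPdef, Polynomial.Chebyshev.T_derivative_eq_U]
    rw [Polynomial.eval_mul, hadef, ← hQdef, ← hBdef]
    norm_num
  set na : ℝ := ‖a‖ with hnadef
  have hna : 0 < na := norm_pos_iff.mpr ha0
  set nB : ℝ := ‖B‖ with hnBdef
  have hnB : 0 ≤ nB := norm_nonneg _
  -- the function
  set f : ℂ → ℂ → ℂ := fun v E => 2 * P.eval (E * 2⁻¹) - v * Q.eval (E * 2⁻¹) with hfdef
  have hfsd : ∀ v E, sparseDiscriminant L v E = f v E := by
    intro v E
    rw [sparseDiscriminant, hfdef, hPdef, hQdef, div_eq_mul_inv]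
  -- polynomial factorizations
  set W : ℂ[X] := (C α + X) * C (2⁻¹ : ℂ) with hWdef
  have hWeval : ∀ h : ℂ, W.eval h = (α + h) * 2⁻¹ := by
    intro h; simp [hWdef]
  have hdW : derivative W = C (2⁻¹ : ℂ) := by
    rw [hWdef, derivative_mul]; simp
  set S : ℂ[X] := C 2 * P.comp W - C a * X with hSdef
  have hS0 : S.coeff 0 = 0 := by
    rw [Polynomial.coeff_zero_eq_eval_zero, hSdef]
    simp [Polynomial.eval_comp, hWeval, hz2, hT0]
  have hS1 : S.coeff 1 = 0 := by
    have h3 : (derivative S).eval 0 = 0 := by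
      rw [hSdef, derivative_sub, derivative_mul, derivative_mul, Polynomial.derivative_comp, hdW]
      simp [Polynomial.eval_comp, hWeval, hz2, hPda]
    have h1 := Polynomial.coeff_derivative S 0
    rw [← Polynomial.coeff_zero_eq_eval_zero] at h3
    rw [h3] at h1
    simpa using h1.symm
  have hX2 : X ^ 2 ∣ S := by
    rw [Polynomial.X_pow_dvd_iff]
    intro d hd
    interval_cases d
    · exact hS0
    · exact hS1
  obtain ⟨Rm, hRm⟩ := hX2
  have hSeval : ∀ h : ℂ, 2 * P.eval ((α + h) * 2⁻¹) - a * h = h^2 * Rm.eval h := by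
    intro h
    have := congrArg (Polynomial.eval h) hRm
    simpa [hSdef, Polynomial.eval_comp, hWeval] using this
  set S₂ : ℂ[X] := Q.comp W - C B with hS₂def
  have hS₂0 : S₂.coeff 0 = 0 := by
    rw [Polynomial.coeff_zero_eq_eval_zero, hS₂def]
    simp [Polynomial.eval_comp, hWeval, hz2, ← hBdef]
  obtain ⟨R₂, hR₂⟩ := Polynomial.X_dvd_iff.mpr hS₂0
  have hS₂eval : ∀ h : ℂ, Q.eval ((α + h) * 2⁻¹) - B = h * R₂.eval h := by
    intro h
    have := congrArg (Polynomial.eval h) hR₂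
    simpa [hS₂def, Polynomial.eval_comp, hWeval] using this
  -- bounds
  obtain ⟨MR, hMR⟩ := (isCompact_closedBall (0:ℂ) 1).exists_bound_of_continuousOn
    (Rm.continuous).continuousOn
  have hMR0 : 0 ≤ MR := le_trans (norm_nonneg _) (hMR 0 (by simp))
  obtain ⟨MR2, hMR2⟩ := (isCompact_closedBall (0:ℂ) 1).exists_bound_of_continuousOn
    (R₂.continuous).continuousOn
  have hMR20 : 0 ≤ MR2 := le_trans (norm_nonneg _) (hMR2 0 (by simp))
  have hQc : Continuous (fun x : ℂ => (derivative Q).eval (x * 2⁻¹)) := by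
    exact ((derivative Q).continuous).comp (continuous_id.mul continuous_const)
  obtain ⟨MQ, hMQ⟩ := (isCompact_closedBall α 1).exists_bound_of_continuousOn hQc.continuousOn
  have hMQ0 : 0 ≤ MQ := le_trans (norm_nonneg _) (hMQ α (by simp))
  -- continuity radius for P'
  have hev : ∀ᶠ E in nhds α, ‖(derivative P).eval (E * 2⁻¹) - a‖ < na/8 := by
    have hPc : Continuous (fun x : ℂ => (derivative P).eval (x * 2⁻¹)) := by
      exact ((derivative P).continuous).comp (continuous_id.mul continuous_const)
    have hc : ContinuousAt (fun E : ℂ => ‖(derivative P).eval (E * 2⁻¹) - a‖) α := by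
      exact ((hPc.sub continuous_const).norm).continuousAt
    have h0 : Filter.Tendsto (fun E : ℂ => ‖(derivative P).eval (E * 2⁻¹) - a‖)
        (nhds α) (nhds 0) := by
      have := hc.tendsto
      simpa [hz2, hPda] using this
    exact h0.eventually_lt_const (by positivity)
  obtain ⟨r, hr0, hrball⟩ := Metric.eventually_nhds_iff_ball.mp hev
  -- radius
  set ε : ℝ := min (r/2) (min 1 (na/(4*(MR+1)))) with hεdef
  have hε0 : 0 < ε := by
    apply lt_min (by linarith) (lt_min one_pos (by positivity))
  have hε1 : ε ≤ 1 := le_trans (min_le_right _ _) (min_le_left _ _)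
  have hεr : ∀ x : ℂ, x ∈ Metric.closedBall α ε → x ∈ Metric.ball α r := by
    intro x hx
    rw [Metric.mem_closedBall] at hx
    rw [Metric.mem_ball]
    calc dist x α ≤ ε := hx
    _ ≤ r/2 := min_le_left _ _
    _ < r := by linarith
  have hεMR : MR * ε ≤ na/4 := by
    have h1 : ε ≤ na/(4*(MR+1)) := le_trans (min_le_right _ _) (min_le_right _ _)
    have h2 : ε * (4*(MR+1)) ≤ na := by
      rw [← le_div_iff₀ (by positivity)]; exact h1
    have heq : MR * ε = (ε * (4*(MR+1))) * (1/4) - ε := by ring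
    linarith only [h2, hε0, heq]
  -- smallness
  set δ : ℝ := min (na/(4*(MQ+1))) (min (na/(4*(MR2+1))) (na*ε/(2*(2+nB)))) with hδdef
  have hδ0 : 0 < δ := by
    apply lt_min (by positivity) (lt_min (by positivity) (by positivity))
  set K : ℝ := 2*(2+nB)/na with hKdef
  have hK0 : 0 < K := by positivity
  have hδa : δ ≤ na/(4*(MQ+1)) := by rw [hδdef]; exact min_le_left _ _
  have hδb : δ ≤ na/(4*(MR2+1)) := by
    rw [hδdef]; exact le_trans (min_le_right _ _) (min_le_left _ _)
  have hδc : δ ≤ na*ε/(2*(2+nB)) := by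
    rw [hδdef]; exact le_trans (min_le_right _ _) (min_le_right _ _)
  clear_value θ s θc z α B a na nB ε δ K
  refine ⟨(MR*K^2 + MR2*K)/na + 1, δ, by
    have p1 : 0 ≤ MR*K^2 := mul_nonneg hMR0 (sq_nonneg K)
    have p2 : 0 ≤ MR2*K := mul_nonneg hMR20 hK0.le
    have p3 : 0 ≤ (MR*K^2 + MR2*K)/na := div_nonneg (by linarith) hna.le
    linarith, hδ0, ?_⟩
  intro v κ hvκ
  set w : ℂ := ((Real.cos κ : ℝ) : ℂ) with hwdef
  have hwn : ‖w‖ = |Real.cos κ| := by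
    rw [hwdef, Complex.norm_real, Real.norm_eq_abs]
  set m : ℝ := ‖v‖ + |Real.cos κ| with hmdef
  have hm0 : 0 ≤ m := by positivity
  have hmδ : m < δ := hvκ
  have hvm : ‖v‖ ≤ m := by
    rw [hmdef]; have := abs_nonneg (Real.cos κ); linarith
  have hwm : |Real.cos κ| ≤ m := by
    rw [hmdef]; have := norm_nonneg v; linarith
  clear_value w m
  have hwvB : ‖2*w + v*B‖ ≤ (2+nB)*m := by
    calc ‖2*w + v*B‖ ≤ ‖2*w‖ + ‖v*B‖ := norm_add_le _ _
    _ = 2*|Real.cos κ| + ‖v‖*nB := by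
        rw [norm_mul, norm_mul, hwn, hnBdef]; norm_num
    _ ≤ (2+nB)*m := by
        have h1 := mul_le_mul_of_nonneg_right hvm hnB
        have heq : (2+nB)*m = 2*m + m*nB := by ring
        linarith only [h1, hwm, heq]
  -- derivative facts
  have hder1 : ∀ (p : ℂ[X]) (x : ℂ), HasDerivAt (fun E : ℂ => p.eval (E * 2⁻¹))
      ((derivative p).eval (x * 2⁻¹) * 2⁻¹) x := by
    intro p x
    have h1 := (Polynomial.hasDerivAt p (x * 2⁻¹)).comp x ((hasDerivAt_id x).mul_const (2⁻¹ : ℂ))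
    rw [one_mul] at h1; exact h1
  set dd : ℂ → ℂ := fun x => (derivative P).eval (x * 2⁻¹)
      - v * ((derivative Q).eval (x * 2⁻¹) * 2⁻¹) with hdddef
  have hgd : ∀ x : ℂ, HasDerivAt (fun E : ℂ => f v E - a * E) (dd x - a) x := by
    intro x
    have h1 := (((hder1 P x).const_mul (2:ℂ)).sub ((hder1 Q x).const_mul v)).sub
      ((hasDerivAt_id x).const_mul a)
    refine h1.congr_deriv ?_
    rw [hdddef]; ring
  have hddb : ∀ x ∈ Metric.closedBall α ε, ‖dd x - a‖ ≤ na/2 := by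
    intro x hx
    have h1 : ‖(derivative P).eval (x * 2⁻¹) - a‖ < na/8 := hrball x (hεr x hx)
    have h2 : ‖(derivative Q).eval (x * 2⁻¹)‖ ≤ MQ := by
      apply hMQ x
      rw [Metric.mem_closedBall] at hx ⊢; linarith
    have h3 : ‖v‖ ≤ na/(4*(MQ+1)) := le_trans hvm (le_trans hmδ.le hδa)
    have h3' : ‖v‖ * (4*(MQ+1)) ≤ na := by
      rw [← le_div_iff₀ (by linarith : (0:ℝ) < 4*(MQ+1))]; exact h3
    have h4 : ‖dd x - a‖ ≤ ‖(derivative P).eval (x * 2⁻¹) - a‖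
        + ‖v‖ * (‖(derivative Q).eval (x * 2⁻¹)‖ * 2⁻¹) := by
      rw [hdddef]
      calc ‖(derivative P).eval (x * 2⁻¹) - v * ((derivative Q).eval (x * 2⁻¹) * 2⁻¹) - a‖
          = ‖((derivative P).eval (x * 2⁻¹) - a) - v * ((derivative Q).eval (x * 2⁻¹) * 2⁻¹)‖ := by
            ring_nf
      _ ≤ ‖(derivative P).eval (x * 2⁻¹) - a‖ + ‖v * ((derivative Q).eval (x * 2⁻¹) * 2⁻¹)‖ :=
            norm_sub_le _ _
      _ = ‖(derivative P).eval (x * 2⁻¹) - a‖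
            + ‖v‖ * (‖(derivative Q).eval (x * 2⁻¹)‖ * 2⁻¹) := by
            rw [norm_mul, norm_mul]; norm_num
    have h5 : ‖v‖ * (‖(derivative Q).eval (x * 2⁻¹)‖ * 2⁻¹) ≤ ‖v‖ * (MQ * 2⁻¹) := by
      apply mul_le_mul_of_nonneg_left (by linarith) (norm_nonneg v)
    have h6 : ‖v‖ * (MQ * 2⁻¹) = (‖v‖ * (4*(MQ+1))) * (1/8) - ‖v‖ * (1/2) := by ring
    linarith only [h1, h4, h5, h6, h3', norm_nonneg v, hna]
  -- approximating linear map and its inverse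
  set f' : ℂ →L[ℂ] ℂ := ContinuousLinearMap.smulRight (1 : ℂ →L[ℂ] ℂ) a with hf'def
  have hf'app : ∀ y : ℂ, f' y = y * a := by
    intro y; simp [hf'def, smul_eq_mul]
  have hcoe : ((Real.toNNReal (na/2) : NNReal) : ℝ) = na/2 := Real.coe_toNNReal _ (by linarith)
  have hMVT : ∀ x ∈ Metric.closedBall α ε, ∀ y ∈ Metric.closedBall α ε,
      ‖(f v x - a * x) - (f v y - a * y)‖ ≤ na/2 * ‖x - y‖ := by
    intro x hx y hy
    exact Convex.norm_image_sub_le_of_norm_hasFDerivWithin_le (𝕜 := ℂ)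
      (f := fun E : ℂ => f v E - a * E)
      (f' := fun x0 : ℂ => ContinuousLinearMap.smulRight (1 : ℂ →L[ℂ] ℂ) (dd x0 - a))
      (fun x0 _ => ((hgd x0).hasFDerivAt.hasFDerivWithinAt))
      (fun x0 hx0 => by
        rw [ContinuousLinearMap.norm_smulRight_apply]
        have h1 : ‖(1 : ℂ →L[ℂ] ℂ)‖ = 1 := by
          rw [ContinuousLinearMap.one_def, ContinuousLinearMap.norm_id]
        rw [h1, one_mul]
        exact hddb x0 hx0)
      (convex_closedBall _ _) hy hx
  have hcoe : ((Real.toNNReal (na/2) : NNReal) : ℝ) = na/2 := Real.coe_toNNReal _ (by linarith)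
  set f' : ℂ →L[ℂ] ℂ := ContinuousLinearMap.smulRight (1 : ℂ →L[ℂ] ℂ) a with hf'def
  have hf'app : ∀ y : ℂ, f' y = y * a := by
    intro y; simp [hf'def, smul_eq_mul]
  have hALO : ApproximatesLinearOn (f v) f' (Metric.closedBall α ε) (Real.toNNReal (na/2)) := by
    intro x hx y hy
    have heq : f v x - f v y - f' (x - y) = (f v x - a * x) - (f v y - a * y) := by
      rw [hf'app]; ring
    rw [heq, hcoe]
    exact hMVT x hx y hy
  set f'symm : f'.NonlinearRightInverse :=
    { toFun := fun y => a⁻¹ * y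
      nnnorm := ‖a‖₊⁻¹
      bound' := by
        intro y
        rw [norm_mul, norm_inv]
        push_cast
        simp
      right_inv' := by
        intro y
        show f' (a⁻¹ * y) = y
        rw [hf'app, mul_comm a⁻¹ y, mul_assoc, inv_mul_cancel₀ ha0, mul_one] } with hf'symmdef
  have hnnnorm : (f'symm.nnnorm : ℝ) = na⁻¹ := by
    rw [hf'symmdef]
    push_cast
    rw [hnadef]
  have hsurj := hALO.surjOn_closedBall_of_nonlinearRightInverse f'symm hε0.le (subset_refl _)
  have hrad : ((f'symm.nnnorm : ℝ)⁻¹ - (Real.toNNReal (na/2) : ℝ)) * ε = na/2 * ε := by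
    rw [hcoe, hnnnorm, inv_inv]; ring
  have hfvα : f v α = -(v * B) := by
    show 2 * P.eval (α * 2⁻¹) - v * Q.eval (α * 2⁻¹) = -(v * B)
    rw [hz2, hT0, ← hBdef]; ring
  have hmem : (2 * w) ∈ Metric.closedBall (f v α)
      (((f'symm.nnnorm : ℝ)⁻¹ - (Real.toNNReal (na/2) : ℝ)) * ε) := by
    rw [Metric.mem_closedBall, hrad, hfvα, dist_eq_norm]
    have h1 : ‖2*w - -(v*B)‖ = ‖2*w + v*B‖ := by ring_nf
    rw [h1]
    have h2 : m * (2*(2+nB)) ≤ na * ε := by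
      have h3 : m ≤ na*ε/(2*(2+nB)) := le_trans hmδ.le hδc
      rw [← le_div_iff₀ (by linarith : (0:ℝ) < 2*(2+nB))]
      exact h3
    calc ‖2*w + v*B‖ ≤ (2+nB)*m := hwvB
    _ ≤ na/2*ε := by
        have heq : (2+nB)*m = (m * (2*(2+nB))) * (1/2) := by ring
        linarith only [h2, heq]
  obtain ⟨E, hEball, hfE⟩ := hsurj hmem
  refine ⟨E, ?_, ?_⟩
  · rw [hfsd]; exact hfE
  -- the perturbation expansion
  set h : ℂ := E - α with hhdef
  have hEh : α + h = E := by rw [hhdef]; ring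
  have hhε : ‖h‖ ≤ ε := by
    rw [hhdef, ← dist_eq_norm]
    exact Metric.mem_closedBall.mp hEball
  clear_value h
  have hh1 : h ∈ Metric.closedBall (0:ℂ) 1 := by
    rw [Metric.mem_closedBall, dist_zero_right]
    linarith
  have hρ : ‖Rm.eval h‖ ≤ MR := hMR h hh1
  have hρ₂ : ‖R₂.eval h‖ ≤ MR2 := hMR2 h hh1
  have hfE' : 2 * P.eval (E * 2⁻¹) - v * Q.eval (E * 2⁻¹) = 2 * w := hfE
  have e1 : 2 * P.eval (E * 2⁻¹) - a * h = h^2 * Rm.eval h := by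
    rw [← hEh]; exact hSeval h
  have e2 : Q.eval (E * 2⁻¹) - B = h * R₂.eval h := by
    rw [← hEh]; exact hS₂eval h
  have key : a * h = 2*w + v*B - h^2 * Rm.eval h + v*(h * R₂.eval h) := by
    linear_combination hfE' - e1 + v*e2
  -- first-order bound on h
  have hvMR2 : ‖v‖ * MR2 ≤ na/4 := by
    have h3 : ‖v‖ ≤ na/(4*(MR2+1)) := le_trans hvm (le_trans hmδ.le hδb)
    have h3' : ‖v‖ * (4*(MR2+1)) ≤ na := by
      rw [← le_div_iff₀ (by linarith : (0:ℝ) < 4*(MR2+1))]; exact h3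
    have heq : ‖v‖ * MR2 = (‖v‖ * (4*(MR2+1))) * (1/4) - ‖v‖ := by ring
    linarith only [h3', norm_nonneg v, heq]
  have hKm : ‖h‖ ≤ K * m := by
    have n1 : na * ‖h‖ = ‖a * h‖ := by rw [norm_mul, hnadef]
    have n2 : ‖a*h‖ ≤ ‖2*w + v*B‖ + ‖h^2 * Rm.eval h‖ + ‖v*(h*R₂.eval h)‖ := by
      rw [key]
      calc ‖2*w + v*B - h^2*Rm.eval h + v*(h*R₂.eval h)‖
          ≤ ‖2*w + v*B - h^2*Rm.eval h‖ + ‖v*(h*R₂.eval h)‖ := norm_add_le _ _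
      _ ≤ ‖2*w + v*B‖ + ‖h^2*Rm.eval h‖ + ‖v*(h*R₂.eval h)‖ := by
          have := norm_sub_le (2*w + v*B) (h^2*Rm.eval h)
          linarith
    have n3 : ‖h^2 * Rm.eval h‖ ≤ na/4 * ‖h‖ := by
      rw [norm_mul, norm_pow]
      calc ‖h‖^2 * ‖Rm.eval h‖ ≤ ‖h‖^2 * MR := by
            apply mul_le_mul_of_nonneg_left hρ (by positivity)
      _ = ‖h‖ * MR * ‖h‖ := by ring
      _ ≤ (ε * MR) * ‖h‖ := by
            apply mul_le_mul_of_nonneg_right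
              (mul_le_mul_of_nonneg_right hhε hMR0) (norm_nonneg h)
      _ ≤ na/4 * ‖h‖ := by
            apply mul_le_mul_of_nonneg_right _ (norm_nonneg h)
            calc ε * MR = MR * ε := by ring
            _ ≤ na/4 := hεMR
    have n4 : ‖v*(h*R₂.eval h)‖ ≤ na/4 * ‖h‖ := by
      rw [norm_mul, norm_mul]
      calc ‖v‖ * (‖h‖ * ‖R₂.eval h‖) ≤ ‖v‖ * (‖h‖ * MR2) := by
            apply mul_le_mul_of_nonneg_left
              (mul_le_mul_of_nonneg_left hρ₂ (norm_nonneg h)) (norm_nonneg v)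
      _ = (‖v‖ * MR2) * ‖h‖ := by ring
      _ ≤ na/4 * ‖h‖ := mul_le_mul_of_nonneg_right hvMR2 (norm_nonneg h)
    have hb : na * ‖h‖ ≤ (2+nB)*m + na/4 * ‖h‖ + na/4 * ‖h‖ := by
      rw [n1]
      linarith only [hwvB, n2, n3, n4]
    rw [hKdef, div_mul_eq_mul_div, le_div_iff₀ hna]
    linarith only [hb]
  -- exact identity for the linear term
  have hangle : ((2*(j:ℂ)-1)*(Real.pi:ℂ)/(2*(L:ℂ))) = θc := by
    rw [hθcdef, hθdef]; push_cast; ring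
  have hBe : B = ((-1:ℂ))^(j-1) / (s:ℂ) := by
    rw [eq_div_iff hsc0, he₁def] at *
    push_cast at hBs ⊢
    exact hBs
  have hlin : v/(L:ℂ) + 2*(-1:ℂ)^(j-1)*((s/(L:ℝ) : ℝ) : ℂ)*w = (2*w + v*B)/a := by
    rcases Nat.even_or_odd (j-1) with hp | hp
    · rw [hp.neg_one_pow] at hBe ⊢
      rw [hadef, hBe]
      push_cast
      field_simp [hLC, hsc0]
      ring
    · rw [hp.neg_one_pow] at hBe ⊢
      rw [hadef, hBe]
      push_cast
      field_simp [hLC, hsc0]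
      ring
  have hgoal2 : h - (2*w + v*B)/a = (v*(h*R₂.eval h) - h^2*Rm.eval h)/a := by
    rw [eq_div_iff ha0, sub_mul, div_mul_cancel₀ _ ha0]
    linear_combination key
  rw [show ((2:ℂ)*(j:ℂ)-1)*(Real.pi:ℂ)/(2*(L:ℂ)) = θc from hangle, ← hzdef, ← hαdef]
  rw [show E - α - v/(L:ℂ) - 2*(-1:ℂ)^(j-1)*((s/(L:ℝ) : ℝ) : ℂ)*w = h - (2*w + v*B)/a from by
    rw [hhdef, ← hlin]; ring]
  rw [hgoal2, norm_div, ← hnadef]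
  have hnum : ‖v*(h*R₂.eval h) - h^2*Rm.eval h‖ ≤ (MR2*K + MR*K^2)*m^2 := by
    have b1 : ‖v*(h*R₂.eval h)‖ ≤ m*((K*m)*MR2) := by
      rw [norm_mul, norm_mul]
      apply mul_le_mul hvm ?_ ?_ hm0
      · exact mul_le_mul hKm hρ₂ (norm_nonneg _) (mul_nonneg hK0.le hm0)
      · exact mul_nonneg (norm_nonneg _) (norm_nonneg _)
    have b2 : ‖h^2*Rm.eval h‖ ≤ (K*m)^2*MR := by
      rw [norm_mul, norm_pow]
      apply mul_le_mul ?_ hρ (norm_nonneg _) (by positivity)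
      exact pow_le_pow_left₀ (norm_nonneg h) hKm 2
    calc ‖v*(h*R₂.eval h) - h^2*Rm.eval h‖
        ≤ ‖v*(h*R₂.eval h)‖ + ‖h^2*Rm.eval h‖ := norm_sub_le _ _
    _ ≤ m*((K*m)*MR2) + (K*m)^2*MR := by linarith
    _ = (MR2*K + MR*K^2)*m^2 := by ring
  rw [div_le_iff₀ hna]
  have hCna : ((MR*K^2 + MR2*K)/na + 1)*m^2*na = (MR*K^2+MR2*K)*m^2 + na*m^2 := by
    field_simp
  rw [hCna]
  linarith only [hnum, mul_nonneg hna.le (sq_nonneg m)]
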